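/- Let ρ be a density matrix of size d with eigenvalues λ₁, …, λ_d (with multiplicity), and let H = −∑ᵢ λᵢ log₂ λᵢ be its von Neumann entropy. For any δ > 0, the total weight of non-typical eigenvalues of ρ^⊗n, namely p_n = ∑ over tuples x : Fin n → Fin d with ∏ᵢ λ_{x(i)} ∉ [2^{−n(H+δ)}, 2^{−n(H−δ)}] of ∏ᵢ λ_{x(i)}, converges to 0 exponentially fast in n: there exist κ > 0 and C > 0 such that p_n ≤ C · 2^{−κn} for all n ∈ ℕ. -/

import Mathlib

open scoped BigOperators ComplexOrder
open Matrix Filter MeasureTheory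

noncomputable section

namespace QMarkov

variable {ι : Type*}

/-- Positive semidefinite square root of a matrix (junk value `0` if not PSD). -/
noncomputable def matSqrt [Fintype ι] (A : Matrix ι ι ℂ) : Matrix ι ι ℂ := by
  classical exact if h : A.PosSemidef then
    (h.1.eigenvectorUnitary : Matrix ι ι ℂ) *
      Matrix.diagonal ((↑) ∘ (fun x : ℝ => Real.sqrt x) ∘ h.1.eigenvalues) *
      (star h.1.eigenvectorUnitary : Matrix ι ι ℂ) else 0

/-- Trace norm (sum of singular values). -/
noncomputable def traceNorm [Fintype ι] (A : Matrix ι ι ℂ) : ℝ :=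
  (matSqrt (Aᴴ * A)).trace.re

/-- Fidelity `F(ρ,σ) = ‖√ρ √σ‖₁`. -/
noncomputable def fid [Fintype ι] (ρ σ : Matrix ι ι ℂ) : ℝ :=
  traceNorm (matSqrt ρ * matSqrt σ)

/-- Generalized trace distance `Δ(ρ,σ) = ½‖ρ-σ‖₁ + ½|tr(ρ-σ)|`. -/
noncomputable def tdist [Fintype ι] (ρ σ : Matrix ι ι ℂ) : ℝ :=
  (1 / 2) * traceNorm (ρ - σ) + (1 / 2) * ‖(ρ - σ).trace‖

/-- Von Neumann entropy `H(ρ) = -∑ᵢ λᵢ log₂ λᵢ` (junk `0` if not Hermitian);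
the convention `0 · log₂ 0 = 0` is automatic since `Real.logb 2 0 = 0`. -/
noncomputable def vnEntropy [Fintype ι] (A : Matrix ι ι ℂ) : ℝ := by
  classical exact
    if h : A.IsHermitian then -∑ i, h.eigenvalues i * Real.logb 2 (h.eigenvalues i) else 0

/-- Matrix base-2 logarithm on the support of a Hermitian matrix (junk `0` if not Hermitian). -/
noncomputable def mlog [Fintype ι] (A : Matrix ι ι ℂ) : Matrix ι ι ℂ := by
  classical exact
    if h : A.IsHermitian then
      (h.eigenvectorUnitary : Matrix ι ι ℂ) *
        Matrix.diagonal (fun i => (Real.logb 2 (h.eigenvalues i) : ℂ)) *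
        (h.eigenvectorUnitary : Matrix ι ι ℂ)ᴴ
    else 0

/-- Square root of the Moore–Penrose pseudoinverse of a Hermitian PSD matrix
(junk `0` if not Hermitian). -/
noncomputable def pinvSqrt [Fintype ι] (A : Matrix ι ι ℂ) : Matrix ι ι ℂ := by
  classical exact
    if h : A.IsHermitian then
      (h.eigenvectorUnitary : Matrix ι ι ℂ) *
        Matrix.diagonal (fun i => ((Real.sqrt (h.eigenvalues i))⁻¹ : ℂ)) *
        (h.eigenvectorUnitary : Matrix ι ι ℂ)ᴴ
    else 0

/-- Relative entropy `D(ρ‖σ)`, equal to `tr(ρ(log₂ρ - log₂σ))/tr ρ` when the support of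
`ρ` is contained in the support of `σ`, and `+∞` otherwise. -/
noncomputable def relEnt [Fintype ι] (ρ σ : Matrix ι ι ℂ) : EReal := by
  classical exact
    if ∀ v : ι → ℂ, σ *ᵥ v = 0 → ρ *ᵥ v = 0 then
      (((ρ * (mlog ρ - mlog σ)).trace.re / ρ.trace.re : ℝ) : EReal)
    else ⊤

/-- `n`-fold tensor power of a matrix. -/
def tpow (A : Matrix ι ι ℂ) (n : ℕ) : Matrix (Fin n → ι) (Fin n → ι) ℂ :=
  Matrix.of fun x y => ∏ i, A (x i) (y i)

/-- Permutation invariance of a matrix on an `n`-fold tensor power space. -/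
def permInv {n : ℕ} (ρ : Matrix (Fin n → ι) (Fin n → ι) ℂ) : Prop :=
  ∀ π : Equiv.Perm (Fin n), ∀ x y, ρ (x ∘ π) (y ∘ π) = ρ x y

/-- Rank-one projector `|φ⟩⟨φ|`. -/
def vecOuter (φ : ι → ℂ) : Matrix ι ι ℂ :=
  Matrix.of fun i j => φ i * star (φ j)

variable {A B C D E : Type*}

/-- Partial trace over the second factor. -/
def ptr2 [Fintype E] (M : Matrix (D × E) (D × E) ℂ) : Matrix D D ℂ :=
  Matrix.of fun d d' => ∑ e, M (d, e) (d', e)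

/-- Partial trace over the `n` copies of `E` of a matrix on `(D ⊗ E)^⊗n`. -/
def ptrPow [Fintype E] {n : ℕ} (M : Matrix (Fin n → D × E) (Fin n → D × E) ℂ) :
    Matrix (Fin n → D) (Fin n → D) ℂ :=
  Matrix.of fun x y => ∑ e : Fin n → E, M (fun i => (x i, e i)) (fun i => (y i, e i))

/-- Marginal `ρ_AB` of a tripartite matrix. -/
def margAB [Fintype C] (ρ : Matrix (A × B × C) (A × B × C) ℂ) : Matrix (A × B) (A × B) ℂ :=
  Matrix.of fun x y => ∑ c, ρ (x.1, x.2, c) (y.1, y.2, c)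

/-- Marginal `ρ_BC` of a tripartite matrix. -/
def margBC [Fintype A] (ρ : Matrix (A × B × C) (A × B × C) ℂ) : Matrix (B × C) (B × C) ℂ :=
  Matrix.of fun x y => ∑ a, ρ (a, x.1, x.2) (a, y.1, y.2)

/-- Marginal `ρ_B` of a tripartite matrix. -/
def margB [Fintype A] [Fintype C] (ρ : Matrix (A × B × C) (A × B × C) ℂ) : Matrix B B ℂ :=
  Matrix.of fun b b' => ∑ a, ∑ c, ρ (a, b, c) (a, b', c)

/-- Conditional mutual information `I(A:C|B)_ρ = H(ρ_AB) + H(ρ_BC) - H(ρ_B) - H(ρ_ABC)`. -/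
noncomputable def cmi [Fintype A] [Fintype B] [Fintype C]
    (ρ : Matrix (A × B × C) (A × B × C) ℂ) : ℝ :=
  vnEntropy (margAB ρ) + vnEntropy (margBC ρ) - vnEntropy (margB ρ) - vnEntropy ρ

/-- Application of `I_A ⊗ T` to a matrix on `A ⊗ B`, for `T` a map from matrices over `B`
to matrices over `B ⊗ C`. -/
def extT (T : Matrix B B ℂ → Matrix (B × C) (B × C) ℂ)
    (ρ : Matrix (A × B) (A × B) ℂ) : Matrix (A × B × C) (A × B × C) ℂ :=
  Matrix.of fun x y => T (Matrix.of fun b b' => ρ (x.1, b) (y.1, b')) x.2 y.2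

/-- `M ⊗ id` on `B ⊗ C`. -/
def kronId (M : Matrix B B ℂ) : Matrix (B × C) (B × C) ℂ := by
  classical exact Matrix.of fun x y => if x.2 = y.2 then M x.1 y.1 else 0

end QMarkov

namespace QMarkov
variable {A B C : Type*}

/-- Marginal on the first and third factors of a tripartite matrix. -/
def marg13 [Fintype B] (ρ : Matrix (A × B × C) (A × B × C) ℂ) : Matrix (A × C) (A × C) ℂ :=
  Matrix.of fun x y => ∑ b, ρ (x.1, b, x.2) (y.1, b, y.2)

/-- Marginal on the third factor of a tripartite matrix. -/
def marg3 [Fintype A] [Fintype B] (ρ : Matrix (A × B × C) (A × B × C) ℂ) : Matrix C C ℂ :=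
  Matrix.of fun c c' => ∑ a, ∑ b, ρ (a, b, c) (a, b, c')

/-- Conditional mutual information `I(first : second | third)` of a tripartite matrix, i.e.
for `ρ` on `A ⊗ C ⊗ E` this is `I(A:C|E)_ρ = H(ρ_AE) + H(ρ_CE) - H(ρ_E) - H(ρ_ACE)`. -/
noncomputable def cmi13 [Fintype A] [Fintype B] [Fintype C]
    (ρ : Matrix (A × B × C) (A × B × C) ℂ) : ℝ :=
  vnEntropy (marg13 ρ) + vnEntropy (margBC ρ) - vnEntropy (marg3 ρ) - vnEntropy ρ

end QMarkov
namespace QMarkov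

open Classical

private lemma aux_slope {ψ : ℝ → ℝ} {c : ℝ} (h : HasDerivAt ψ c 0) (hc : c < 0) (e : ψ 0 = 1) :
    ∀ᶠ t in nhdsWithin 0 (Set.Ioi 0), ψ t < 1 := by
  have hs := hasDerivAt_iff_tendsto_slope.mp h
  have h2 : Tendsto (slope ψ 0) (nhdsWithin 0 (Set.Ioi 0)) (nhds c) :=
    hs.mono_left (nhdsWithin_mono 0 (fun x hx => ne_of_gt hx))
  have h3 : ∀ᶠ t in nhdsWithin 0 (Set.Ioi 0), slope ψ 0 t < 0 := h2.eventually_lt_const hc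
  filter_upwards [h3, self_mem_nhdsWithin] with t ht hmem
  rw [slope_def_field] at ht
  have htpos : (0:ℝ) < t := hmem
  rcases div_neg_iff.mp (by simpa [e] using ht) with ⟨h1, h2'⟩ | ⟨h1, h2'⟩
  · linarith
  · linarith

private lemma aux_deriv_pow_sub (a : ℝ) (ha : 0 < a) :
    HasDerivAt (fun t : ℝ => a ^ (1 - t)) (-(a * Real.log a)) 0 := by
  have h1 : HasDerivAt (fun u : ℝ => a ^ u) (a ^ (1 - (0:ℝ)) * Real.log a) (1 - 0) :=
    (Real.hasStrictDerivAt_const_rpow ha _).hasDerivAt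
  have h2 : HasDerivAt (fun t : ℝ => 1 - t) (-1 : ℝ) 0 := by
    simpa using (hasDerivAt_id' (0:ℝ)).const_sub (1:ℝ)
  simpa [Real.rpow_one, Function.comp_def] using h1.comp 0 h2

private lemma aux_deriv_pow_add (a : ℝ) (ha : 0 < a) :
    HasDerivAt (fun t : ℝ => a ^ (1 + t)) (a * Real.log a) 0 := by
  have h1 : HasDerivAt (fun u : ℝ => a ^ u) (a ^ (1 + (0:ℝ)) * Real.log a) (1 + 0) :=
    (Real.hasStrictDerivAt_const_rpow ha _).hasDerivAt
  have h2 : HasDerivAt (fun t : ℝ => 1 + t) (1 : ℝ) 0 := by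
    simpa using (hasDerivAt_id' (0:ℝ)).const_add (1:ℝ)
  simpa [Real.rpow_one, Function.comp_def] using h1.comp 0 h2

private lemma aux_deriv_two_pow (c : ℝ) :
    HasDerivAt (fun t : ℝ => (2:ℝ) ^ (t * c)) (Real.log 2 * c) 0 := by
  have h1 : HasDerivAt (fun u : ℝ => (2:ℝ) ^ u) ((2:ℝ) ^ ((0:ℝ) * c) * Real.log 2) (0 * c) :=
    (Real.hasStrictDerivAt_const_rpow (by norm_num) _).hasDerivAt
  have h2 : HasDerivAt (fun t : ℝ => t * c) c 0 := by
    simpa using (hasDerivAt_id (0:ℝ)).mul_const c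
  simpa [Real.rpow_zero, mul_comm, Function.comp_def] using h1.comp 0 h2


/-- Asymptotic equipartition: the total weight of non-typical eigenvalues of
`ρ^⊗n` decays exponentially fast in `n`. -/
theorem typical_weight_tendsto_one_exponentially
    (d : ℕ) (ρ : Matrix (Fin d) (Fin d) ℂ) (hρ : ρ.PosSemidef) (hρtr : ρ.trace = 1)
    (lam : Fin d → ℝ) (hlam : lam = hρ.1.eigenvalues)
    (H : ℝ) (hH : H = -∑ i, lam i * Real.logb 2 (lam i))
    (δ : ℝ) (hδ : 0 < δ)
    (p : ℕ → ℝ)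
    (hp : ∀ n : ℕ, p n = ∑ x ∈ Finset.univ.filter
        (fun x : Fin n → Fin d =>
          (∏ i, lam (x i)) ∉
            Set.Icc ((2 : ℝ) ^ (-((n : ℝ) * (H + δ)))) ((2 : ℝ) ^ (-((n : ℝ) * (H - δ))))),
        ∏ i, lam (x i)) :
    ∃ κ : ℝ, 0 < κ ∧ ∃ Cst : ℝ, 0 < Cst ∧ ∀ n : ℕ, p n ≤ Cst * (2 : ℝ) ^ (-(κ * n)) := by
  classical
  have hL2 : (0:ℝ) < Real.log 2 := Real.log_pos (by norm_num)
  have hlam0 : ∀ i, 0 ≤ lam i := fun i => hlam ▸ hρ.eigenvalues_nonneg i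
  -- the eigenvalues sum to 1
  have hsum : ∑ i, lam i = 1 := by
    have h1 : ρ.trace = ∑ i, (hρ.1.eigenvalues i : ℂ) := by
      exact hρ.1.trace_eq_sum_eigenvalues
    rw [hρtr] at h1
    have h2 := h1.symm
    rw [hlam]
    push_cast at h2
    exact_mod_cast h2
  set S : Finset (Fin d) := Finset.univ.filter (fun i => 0 < lam i) with hS
  have hmemS : ∀ i, i ∈ S ↔ 0 < lam i := by intro i; simp [hS]
  have hzero_off : ∀ i, i ∉ S → lam i = 0 := by
    intro i hi
    have := (hmemS i).not.mp hi
    exact le_antisymm (not_lt.mp this) (hlam0 i)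
  have hsumS : ∑ i ∈ S, lam i = 1 := by
    rw [← hsum]
    exact Finset.sum_subset (Finset.subset_univ S) (fun i _ hi => hzero_off i hi)
  have hSne : S.Nonempty := by
    by_contra hne
    rw [Finset.not_nonempty_iff_eq_empty.mp hne] at hsumS
    simp at hsumS
  -- entropy identity
  have hHlog : ∑ i ∈ S, lam i * Real.log (lam i) = -(H * Real.log 2) := by
    have h1 : ∑ i, lam i * Real.log (lam i) = -(H * Real.log 2) := by
      rw [hH, neg_mul, neg_neg, Finset.sum_mul]
      apply Finset.sum_congr rfl
      intro i _
      rw [Real.logb]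
      field_simp
    rw [← h1]
    exact Finset.sum_subset (Finset.subset_univ S)
      (fun i _ hi => by rw [hzero_off i hi]; ring)
  -- moment generating functions
  set φp : ℝ → ℝ := fun t => ∑ i ∈ S, lam i ^ (1 + t) with hφp
  set φm : ℝ → ℝ := fun t => ∑ i ∈ S, lam i ^ (1 - t) with hφm
  set ψ₁ : ℝ → ℝ := fun t => φp t * (2:ℝ) ^ (t * (H - δ)) with hψ₁
  set ψ₂ : ℝ → ℝ := fun t => φm t * (2:ℝ) ^ (t * (-(H + δ))) with hψ₂
  have hφp0 : φp 0 = 1 := by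
    have e : φp 0 = ∑ i ∈ S, lam i := by
      simp only [hφp, add_zero, Real.rpow_one]
    rw [e, hsumS]
  have hφm0 : φm 0 = 1 := by
    have e : φm 0 = ∑ i ∈ S, lam i := by
      simp only [hφm, sub_zero, Real.rpow_one]
    rw [e, hsumS]
  have hdφp : HasDerivAt φp (-(H * Real.log 2)) 0 := by
    rw [← hHlog]
    exact HasDerivAt.fun_sum (fun i hi => aux_deriv_pow_add (lam i) ((hmemS i).mp hi))
  have hdφm : HasDerivAt φm (H * Real.log 2) 0 := by
    have : HasDerivAt φm (∑ i ∈ S, -(lam i * Real.log (lam i))) 0 :=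
      HasDerivAt.fun_sum (fun i hi => aux_deriv_pow_sub (lam i) ((hmemS i).mp hi))
    have e : ∑ i ∈ S, -(lam i * Real.log (lam i)) = H * Real.log 2 := by
      rw [Finset.sum_neg_distrib, hHlog, neg_neg]
    rwa [e] at this
  have hdψ₁ : HasDerivAt ψ₁ (-(δ * Real.log 2)) 0 := by
    have := hdφp.mul (aux_deriv_two_pow (H - δ))
    have h0 : (-(H * Real.log 2)) * (2:ℝ) ^ ((0:ℝ) * (H - δ)) + φp 0 * (Real.log 2 * (H - δ))
        = -(δ * Real.log 2) := by
      rw [zero_mul, Real.rpow_zero, hφp0]; ring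
    rw [← h0]
    exact this
  have hdψ₂ : HasDerivAt ψ₂ (-(δ * Real.log 2)) 0 := by
    have := hdφm.mul (aux_deriv_two_pow (-(H + δ)))
    have h0 : (H * Real.log 2) * (2:ℝ) ^ ((0:ℝ) * (-(H + δ))) + φm 0 * (Real.log 2 * (-(H + δ)))
        = -(δ * Real.log 2) := by
      rw [zero_mul, Real.rpow_zero, hφm0]; ring
    rw [← h0]
    exact this
  have hψ₁0 : ψ₁ 0 = 1 := by rw [hψ₁]; simp [hφp0]
  have hψ₂0 : ψ₂ 0 = 1 := by rw [hψ₂]; simp [hφm0]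
  have hcneg : -(δ * Real.log 2) < 0 := by nlinarith
  -- pick t > 0 with both ψ's < 1
  obtain ⟨t, ⟨h1t, h2t⟩, htmem⟩ :=
    (((aux_slope hdψ₁ hcneg hψ₁0).and (aux_slope hdψ₂ hcneg hψ₂0)).and
      self_mem_nhdsWithin).exists
  have htpos : (0:ℝ) < t := htmem
  -- positivity of ψ's
  have hφppos : 0 < φp t :=
    Finset.sum_pos (fun i hi => Real.rpow_pos_of_pos ((hmemS i).mp hi) _) hSne
  have hφmpos : 0 < φm t :=
    Finset.sum_pos (fun i hi => Real.rpow_pos_of_pos ((hmemS i).mp hi) _) hSne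
  have hψ₁pos : 0 < ψ₁ t := mul_pos hφppos (Real.rpow_pos_of_pos (by norm_num) _)
  have hψ₂pos : 0 < ψ₂ t := mul_pos hφmpos (Real.rpow_pos_of_pos (by norm_num) _)
  set r : ℝ := max (ψ₁ t) (ψ₂ t) with hr
  have hrpos : 0 < r := lt_max_of_lt_left hψ₁pos
  have hrlt1 : r < 1 := max_lt h1t h2t
  refine ⟨-Real.logb 2 r, neg_pos.mpr (Real.logb_neg (by norm_num) hrpos hrlt1), 2,
    by norm_num, fun n => ?_⟩
  have h2r : (2:ℝ) ^ (-(-Real.logb 2 r)) = r := by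
    rw [neg_neg]; exact Real.rpow_logb (by norm_num) (by norm_num) hrpos
  have hrn : (2:ℝ) ^ (-(-Real.logb 2 r * (n:ℝ))) = r ^ n := by
    rw [show (-(-Real.logb 2 r * (n:ℝ))) = (-(-Real.logb 2 r)) * (n:ℝ) by ring,
      Real.rpow_mul (by norm_num), h2r, Real.rpow_natCast]
  rw [hrn]
  -- main Chernoff bound for fixed n
  set a : ℝ := (2:ℝ) ^ (-((n:ℝ) * (H + δ))) with ha
  set b : ℝ := (2:ℝ) ^ (-((n:ℝ) * (H - δ))) with hb
  have hapos : 0 < a := Real.rpow_pos_of_pos (by norm_num) _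
  have hbpos : 0 < b := Real.rpow_pos_of_pos (by norm_num) _
  set P : (Fin n → Fin d) → ℝ := fun x => ∏ i, lam (x i) with hP
  have hPnn : ∀ x, 0 ≤ P x := fun x => Finset.prod_nonneg (fun i _ => hlam0 _)
  -- the two tail bounds
  have tail_high : ∑ x ∈ Finset.univ.filter (fun x : Fin n → Fin d => b < P x), P x
      ≤ ψ₁ t ^ n := by
    have step1 : ∀ x ∈ Finset.univ.filter (fun x : Fin n → Fin d => b < P x),
        P x ≤ b ^ (-t) * ∏ i, lam (x i) ^ (1 + t) := by
      intro x hx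
      have hbx : b < P x := (Finset.mem_filter.mp hx).2
      have hPx : 0 < P x := lt_trans hbpos hbx
      have e1 : P x = P x ^ (-t) * P x ^ (1 + t) := by
        rw [← Real.rpow_add hPx, show -t + (1 + t) = 1 by ring, Real.rpow_one]
      have e2 : P x ^ (1 + t) = ∏ i, lam (x i) ^ (1 + t) :=
        (Real.finset_prod_rpow _ _ (fun i _ => hlam0 _) _).symm
      have e3 : P x ^ (-t) ≤ b ^ (-t) := by
        rw [Real.rpow_neg hPx.le, Real.rpow_neg hbpos.le]
        exact inv_anti₀ (Real.rpow_pos_of_pos hbpos _)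
          (Real.rpow_le_rpow hbpos.le hbx.le htpos.le)
      calc P x = P x ^ (-t) * P x ^ (1 + t) := e1
        _ ≤ b ^ (-t) * P x ^ (1 + t) :=
            mul_le_mul_of_nonneg_right e3 (Real.rpow_nonneg hPx.le _)
        _ = b ^ (-t) * ∏ i, lam (x i) ^ (1 + t) := by rw [e2]
    have step2 : ∑ x ∈ Finset.univ.filter (fun x : Fin n → Fin d => b < P x), P x
        ≤ b ^ (-t) * ∑ x : Fin n → Fin d, ∏ i, lam (x i) ^ (1 + t) := by
      calc ∑ x ∈ Finset.univ.filter (fun x : Fin n → Fin d => b < P x), P x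
          ≤ ∑ x ∈ Finset.univ.filter (fun x : Fin n → Fin d => b < P x),
              b ^ (-t) * ∏ i, lam (x i) ^ (1 + t) := Finset.sum_le_sum step1
        _ ≤ ∑ x : Fin n → Fin d, b ^ (-t) * ∏ i, lam (x i) ^ (1 + t) := by
            apply Finset.sum_le_sum_of_subset_of_nonneg (Finset.filter_subset _ _)
            intro x _ _
            exact mul_nonneg (Real.rpow_nonneg hbpos.le _)
              (Finset.prod_nonneg (fun i _ => Real.rpow_nonneg (hlam0 _) _))
        _ = b ^ (-t) * ∑ x : Fin n → Fin d, ∏ i, lam (x i) ^ (1 + t) := by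
            rw [Finset.mul_sum]
    have step3 : ∑ x : Fin n → Fin d, ∏ i, lam (x i) ^ (1 + t) = φp t ^ n := by
      have h1 : ∑ i, lam i ^ (1 + t) = φp t := by
        rw [hφp]
        exact (Finset.sum_subset (Finset.subset_univ S)
          (fun i _ hi => by rw [hzero_off i hi, Real.zero_rpow (by positivity)])).symm
      rw [← h1, Finset.sum_pow' Finset.univ (fun i => lam i ^ (1 + t)) n,
        Fintype.piFinset_univ]
    have hbt : b ^ (-t) = ((2:ℝ) ^ (t * (H - δ))) ^ n := by
      rw [hb, ← Real.rpow_natCast ((2:ℝ) ^ (t * (H - δ))) n,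
        ← Real.rpow_mul (by norm_num), ← Real.rpow_mul (by norm_num)]
      congr 1; ring
    calc ∑ x ∈ Finset.univ.filter (fun x : Fin n → Fin d => b < P x), P x
        ≤ b ^ (-t) * (φp t ^ n) := by rw [← step3]; exact step2
      _ = ψ₁ t ^ n := by rw [hbt, hψ₁, mul_pow]; ring
  have tail_low : ∑ x ∈ Finset.univ.filter (fun x : Fin n → Fin d => P x < a), P x
      ≤ ψ₂ t ^ n := by
    set g : Fin d → ℝ := fun i => if 0 < lam i then lam i ^ (1 - t) else 0 with hg
    have hgnn : ∀ i, 0 ≤ g i := by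
      intro i; rw [hg]; dsimp only
      split
      · exact Real.rpow_nonneg (hlam0 _) _
      · exact le_refl 0
    have step1 : ∀ x ∈ Finset.univ.filter (fun x : Fin n → Fin d => P x < a),
        P x ≤ a ^ t * ∏ i, g (x i) := by
      intro x hx
      have hxa : P x < a := (Finset.mem_filter.mp hx).2
      by_cases hall : ∀ i, 0 < lam (x i)
      · have hPx : 0 < P x := Finset.prod_pos (fun i _ => hall i)
        have e1 : P x = P x ^ t * P x ^ (1 - t) := by
          rw [← Real.rpow_add hPx, show t + (1 - t) = 1 by ring, Real.rpow_one]
        have e2 : P x ^ (1 - t) = ∏ i, g (x i) := by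
          rw [← Real.finset_prod_rpow _ _ (fun i _ => hlam0 _) _]
          exact Finset.prod_congr rfl (fun i _ => by rw [hg]; simp [hall i])
        have e3 : P x ^ t ≤ a ^ t := Real.rpow_le_rpow hPx.le hxa.le htpos.le
        calc P x = P x ^ t * P x ^ (1 - t) := e1
          _ ≤ a ^ t * P x ^ (1 - t) :=
              mul_le_mul_of_nonneg_right e3 (Real.rpow_nonneg hPx.le _)
          _ = a ^ t * ∏ i, g (x i) := by rw [e2]
      · push_neg at hall
        obtain ⟨i0, hi0⟩ := hall
        have : lam (x i0) = 0 := le_antisymm hi0 (hlam0 _)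
        have hP0 : P x = 0 := Finset.prod_eq_zero (Finset.mem_univ i0) this
        rw [hP0]
        exact mul_nonneg (Real.rpow_nonneg hapos.le _)
          (Finset.prod_nonneg (fun i _ => hgnn _))
    have step2 : ∑ x ∈ Finset.univ.filter (fun x : Fin n → Fin d => P x < a), P x
        ≤ a ^ t * ∑ x : Fin n → Fin d, ∏ i, g (x i) := by
      calc ∑ x ∈ Finset.univ.filter (fun x : Fin n → Fin d => P x < a), P x
          ≤ ∑ x ∈ Finset.univ.filter (fun x : Fin n → Fin d => P x < a),
              a ^ t * ∏ i, g (x i) := Finset.sum_le_sum step1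
        _ ≤ ∑ x : Fin n → Fin d, a ^ t * ∏ i, g (x i) := by
            apply Finset.sum_le_sum_of_subset_of_nonneg (Finset.filter_subset _ _)
            intro x _ _
            exact mul_nonneg (Real.rpow_nonneg hapos.le _)
              (Finset.prod_nonneg (fun i _ => hgnn _))
        _ = a ^ t * ∑ x : Fin n → Fin d, ∏ i, g (x i) := by rw [Finset.mul_sum]
    have step3 : ∑ x : Fin n → Fin d, ∏ i, g (x i) = φm t ^ n := by
      have h1 : ∑ i, g i = φm t := by
        simp only [hφm, hg, hS]
        exact (Finset.sum_filter _ _).symm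
      rw [← h1, Finset.sum_pow' Finset.univ g n, Fintype.piFinset_univ]
    have hat : a ^ t = ((2:ℝ) ^ (t * (-(H + δ)))) ^ n := by
      rw [ha, ← Real.rpow_natCast ((2:ℝ) ^ (t * (-(H + δ)))) n,
        ← Real.rpow_mul (by norm_num), ← Real.rpow_mul (by norm_num)]
      congr 1; ring
    calc ∑ x ∈ Finset.univ.filter (fun x : Fin n → Fin d => P x < a), P x
        ≤ a ^ t * (φm t ^ n) := by rw [← step3]; exact step2
      _ = ψ₂ t ^ n := by rw [hat, hψ₂, mul_pow]; ring
  -- combine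
  have hsplit : p n ≤ ψ₂ t ^ n + ψ₁ t ^ n := by
    rw [hp n]
    have hsub : Finset.univ.filter (fun x : Fin n → Fin d => P x ∉ Set.Icc a b)
        ⊆ (Finset.univ.filter (fun x : Fin n → Fin d => P x < a))
          ∪ (Finset.univ.filter (fun x : Fin n → Fin d => b < P x)) := by
      intro x hx
      rw [Finset.mem_filter] at hx
      rcases hx with ⟨_, hx2⟩
      rw [Set.mem_Icc, not_and_or, not_le, not_le] at hx2
      rcases hx2 with h | h
      · exact Finset.mem_union_left _ (Finset.mem_filter.mpr ⟨Finset.mem_univ _, h⟩)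
      · exact Finset.mem_union_right _ (Finset.mem_filter.mpr ⟨Finset.mem_univ _, h⟩)
    calc ∑ x ∈ Finset.univ.filter (fun x : Fin n → Fin d =>
            (∏ i, lam (x i)) ∉ Set.Icc a b), ∏ i, lam (x i)
        ≤ ∑ x ∈ (Finset.univ.filter (fun x : Fin n → Fin d => P x < a))
            ∪ (Finset.univ.filter (fun x : Fin n → Fin d => b < P x)), P x := by
          exact Finset.sum_le_sum_of_subset_of_nonneg hsub (fun x _ _ => hPnn x)
      _ ≤ (∑ x ∈ Finset.univ.filter (fun x : Fin n → Fin d => P x < a), P x)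
          + ∑ x ∈ Finset.univ.filter (fun x : Fin n → Fin d => b < P x), P x := by
          have := Finset.sum_union_inter (s₁ := Finset.univ.filter (fun x : Fin n → Fin d => P x < a))
            (s₂ := Finset.univ.filter (fun x : Fin n → Fin d => b < P x)) (f := P)
          have hnn : 0 ≤ ∑ x ∈ (Finset.univ.filter (fun x : Fin n → Fin d => P x < a))
              ∩ (Finset.univ.filter (fun x : Fin n → Fin d => b < P x)), P x :=
            Finset.sum_nonneg (fun x _ => hPnn x)
          linarith
      _ ≤ ψ₂ t ^ n + ψ₁ t ^ n := add_le_add tail_low tail_high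
  have hψ₁r : ψ₁ t ^ n ≤ r ^ n := pow_le_pow_left₀ hψ₁pos.le (le_max_left _ _) n
  have hψ₂r : ψ₂ t ^ n ≤ r ^ n := pow_le_pow_left₀ hψ₂pos.le (le_max_right _ _) n
  linarith

end QMarkov
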